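/- Let x̂, x, s ∈ ℝ^n_{>0}, A ∈ ℝ^{n×d} full column rank, X = diag(x), S = diag(s), Q = AᵀXS^{-1}A, and let H ∈ ℝ^{d×d} satisfy H ≈_{ε_H} Q for ε_H ∈ (0, 1/20]. Define x^new = x̂ + XS^{-1}AH^{-1}(b − Aᵀx̂). Then ‖Aᵀx^new − b‖²_{Q^{-1}} ≤ 5ε_H · ‖Aᵀx̂ − b‖²_{Q^{-1}}. -/

import Mathlib

open Matrix

lemma psd_cs {d : ℕ} {M : Matrix (Fin d) (Fin d) ℝ} (hM : M.PosSemidef) (a b : Fin d → ℝ) :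
    (a ⬝ᵥ M *ᵥ b)^2 ≤ (a ⬝ᵥ M *ᵥ a) * (b ⬝ᵥ M *ᵥ b) := by
  open scoped MatrixOrder in
  obtain ⟨C, rfl⟩ := CStarAlgebra.nonneg_iff_eq_star_mul_self.mp hM.nonneg
  simp only [star_eq_conjTranspose]
  have key : ∀ u v : Fin d → ℝ, u ⬝ᵥ (Cᴴ * C) *ᵥ v = (C *ᵥ u) ⬝ᵥ (C *ᵥ v) := by
    intro u v
    rw [← mulVec_mulVec, dotProduct_mulVec, vecMul_conjTranspose]
    simp
  rw [key, key, key]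
  have := Finset.sum_mul_sq_le_sq_mul_sq Finset.univ (C *ᵥ a) (C *ᵥ b)
  simpa [dotProduct, pow_two] using this

lemma smul_posDef {d : ℕ} {M : Matrix (Fin d) (Fin d) ℝ} (hM : M.PosDef) {c : ℝ} (hc : 0 < c) :
    (c • M).PosDef := by
  refine .of_dotProduct_mulVec_pos ?_ fun v hv => ?_
  · have hT : Mᵀ = M := by simpa using hM.1.eq
    unfold Matrix.IsHermitian
    rw [conjTranspose_smul]
    simp [hT]
  · rw [smul_mulVec, dotProduct_smul]
    exact mul_pos hc (hM.dotProduct_mulVec_pos hv)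

lemma inv_quad_le {d : ℕ} {P B : Matrix (Fin d) (Fin d) ℝ} (hP : P.PosDef) (hB : B.PosDef)
    (hle : (B - P).PosSemidef) (r : Fin d → ℝ) :
    r ⬝ᵥ B⁻¹ *ᵥ r ≤ r ⬝ᵥ P⁻¹ *ᵥ r := by
  set w := B⁻¹ *ᵥ r with hw
  set z := P⁻¹ *ᵥ r with hz
  have hBr : B *ᵥ w = r := by
    rw [hw, mulVec_mulVec, Matrix.mul_nonsing_inv _ hB.det_pos.ne'.isUnit, one_mulVec]
  have hPr : P *ᵥ z = r := by
    rw [hz, mulVec_mulVec, Matrix.mul_nonsing_inv _ hP.det_pos.ne'.isUnit, one_mulVec]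
  have ht0 : 0 ≤ r ⬝ᵥ w := by simpa using hB.inv.posSemidef.dotProduct_mulVec_nonneg r
  have hs0 : 0 ≤ r ⬝ᵥ z := by simpa using hP.inv.posSemidef.dotProduct_mulVec_nonneg r
  have CS := psd_cs hP.posSemidef w z
  have e1 : w ⬝ᵥ P *ᵥ z = r ⬝ᵥ w := by rw [hPr, dotProduct_comm]
  have e2 : z ⬝ᵥ P *ᵥ z = r ⬝ᵥ z := by rw [hPr, dotProduct_comm]
  have hPw0 : 0 ≤ w ⬝ᵥ P *ᵥ w := by simpa using hP.posSemidef.dotProduct_mulVec_nonneg w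
  have e3 : w ⬝ᵥ P *ᵥ w ≤ r ⬝ᵥ w := by
    have := hle.dotProduct_mulVec_nonneg w
    simp only [star_trivial, sub_mulVec, dotProduct_sub] at this
    have hBw : w ⬝ᵥ B *ᵥ w = r ⬝ᵥ w := by rw [hBr, dotProduct_comm]
    linarith
  rw [e1, e2] at CS
  set t := r ⬝ᵥ w
  set s := r ⬝ᵥ z
  have hts : t^2 ≤ t * s := le_trans CS (mul_le_mul_of_nonneg_right e3 hs0)
  rcases eq_or_lt_of_le ht0 with h | h
  · simpa [← h] using hs0
  · nlinarith

/-- The local-norm Hessian matrix `Q = Aᵀ X S⁻¹ A`. -/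
noncomputable def Qmat {n d : ℕ} (A : Matrix (Fin n) (Fin d) ℝ) (x s : Fin n → ℝ) :
    Matrix (Fin d) (Fin d) ℝ :=
  Aᵀ * Matrix.diagonal (fun i => x i / s i) * A

lemma Qmat_posDef {n d : ℕ} (A : Matrix (Fin n) (Fin d) ℝ) (hA : A.rank = d)
    (x s : Fin n → ℝ) (hx : ∀ i, 0 < x i) (hs : ∀ i, 0 < s i) :
    (Qmat A x s).PosDef := by
  have hD : (Matrix.diagonal (fun i => x i / s i)).PosDef :=
    Matrix.PosDef.diagonal fun i => div_pos (hx i) (hs i)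
  have hinj : Function.Injective A.mulVecLin := by
    rw [← LinearMap.ker_eq_bot]
    have h2 := A.mulVecLin.finrank_range_add_finrank_ker
    rw [Matrix.rank] at hA
    have hcard : Module.finrank ℝ (Fin d → ℝ) = d := by simp
    rw [hA, hcard] at h2
    have : Module.finrank ℝ (LinearMap.ker A.mulVecLin) = 0 := by omega
    exact Submodule.finrank_eq_zero.mp this
  refine .of_dotProduct_mulVec_pos ?_ fun v hv => ?_
  · have hT : (Qmat A x s)ᵀ = Qmat A x s := by
      simp [Qmat, transpose_mul, Matrix.mul_assoc]
    unfold Matrix.IsHermitian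
    simpa using hT
  · have hAv : A *ᵥ v ≠ 0 := by
      intro h
      apply hv
      apply hinj
      simpa [mulVecLin_apply] using h
    have key : v ⬝ᵥ (Qmat A x s) *ᵥ v
        = (A *ᵥ v) ⬝ᵥ (Matrix.diagonal (fun i => x i / s i)) *ᵥ (A *ᵥ v) := by
      rw [Qmat, Matrix.mul_assoc, ← mulVec_mulVec, dotProduct_mulVec, vecMul_transpose,
        ← mulVec_mulVec]
    simp only [star_trivial]
    rw [key]
    simpa using hD.dotProduct_mulVec_pos hAv

/-- One corrective step decreases the infeasibility potential:
`‖Aᵀx_new − b‖²_{Q⁻¹} ≤ 5 ε_H ‖Aᵀx̂ − b‖²_{Q⁻¹}`. -/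
theorem stmt13 (n d : ℕ) (A : Matrix (Fin n) (Fin d) ℝ) (hA : A.rank = d)
    (xhat x s : Fin n → ℝ) (b : Fin d → ℝ)
    (hxhat : ∀ i, 0 < xhat i) (hx : ∀ i, 0 < x i) (hs : ∀ i, 0 < s i)
    (H : Matrix (Fin d) (Fin d) ℝ) (εH : ℝ) (hεH0 : 0 < εH) (hεH : εH ≤ 1/20)
    (h1 : (H - Real.exp (-εH) • Qmat A x s).PosSemidef)
    (h2 : (Real.exp εH • Qmat A x s - H).PosSemidef) :
    ((Aᵀ *ᵥ (xhat + (Matrix.diagonal (fun i => x i / s i) * A * H⁻¹) *ᵥ (b - Aᵀ *ᵥ xhat)) - b) ⬝ᵥ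
        ((Qmat A x s)⁻¹ *ᵥ
          (Aᵀ *ᵥ (xhat + (Matrix.diagonal (fun i => x i / s i) * A * H⁻¹) *ᵥ (b - Aᵀ *ᵥ xhat)) - b))) ≤
      5 * εH * ((Aᵀ *ᵥ xhat - b) ⬝ᵥ ((Qmat A x s)⁻¹ *ᵥ (Aᵀ *ᵥ xhat - b))) := by
  have hQ : (Qmat A x s).PosDef := Qmat_posDef A hA x s hx hs
  set Q := Qmat A x s with hQdef
  set D := Matrix.diagonal (fun i => x i / s i) with hDdef
  -- H is positive definite
  have hQe : (Real.exp (-εH) • Q).PosDef := smul_posDef hQ (Real.exp_pos _)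
  have hH : H.PosDef := by
    have := hQe.add_posSemidef h1
    have heq : Real.exp (-εH) • Q + (H - Real.exp (-εH) • Q) = H := by abel
    rwa [heq] at this
  have hHunit : IsUnit H.det := hH.det_pos.ne'.isUnit
  have hQunit : IsUnit Q.det := hQ.det_pos.ne'.isUnit
  set r := Aᵀ *ᵥ xhat - b with hrdef
  set u := H⁻¹ *ᵥ r with hudef
  have hHu : H *ᵥ u = r := by
    rw [hudef, mulVec_mulVec, Matrix.mul_nonsing_inv _ hHunit, one_mulVec]
  -- residual after the step
  have hres : Aᵀ *ᵥ (xhat + (D * A * H⁻¹) *ᵥ (b - Aᵀ *ᵥ xhat)) - b = r - Q *ᵥ u := by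
    have hb : b - Aᵀ *ᵥ xhat = -r := by rw [hrdef]; abel
    have hmul : Aᵀ * (D * A * H⁻¹) = Q * H⁻¹ := by
      rw [hQdef, Qmat, ← hDdef, Matrix.mul_assoc, Matrix.mul_assoc, Matrix.mul_assoc]
    rw [hb, mulVec_add, mulVec_mulVec, hmul, ← mulVec_mulVec, mulVec_neg, ← hudef, mulVec_neg,
      hrdef]
    abel
  rw [hres]
  -- expand the quadratic form
  have hQiQ : Q⁻¹ *ᵥ (Q *ᵥ u) = u := by
    rw [mulVec_mulVec, Matrix.nonsing_inv_mul _ hQunit, one_mulVec]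
  have hQQi : Q *ᵥ (Q⁻¹ *ᵥ r) = r := by
    rw [mulVec_mulVec, Matrix.mul_nonsing_inv _ hQunit, one_mulVec]
  have hQT : Qᵀ = Q := by simpa using hQ.1.eq
  have hsymm : ∀ a c : Fin d → ℝ, (Q *ᵥ a) ⬝ᵥ c = a ⬝ᵥ (Q *ᵥ c) := by
    intro a c
    nth_rewrite 1 [← hQT]
    rw [dotProduct_comm, dotProduct_mulVec, vecMul_transpose]
    exact dotProduct_comm _ _
  set t := r ⬝ᵥ u with htdef
  set s0 := r ⬝ᵥ Q⁻¹ *ᵥ r with hs0def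
  have expand : (r - Q *ᵥ u) ⬝ᵥ Q⁻¹ *ᵥ (r - Q *ᵥ u) = s0 - 2 * t + u ⬝ᵥ Q *ᵥ u := by
    rw [mulVec_sub, hQiQ, sub_dotProduct, dotProduct_sub, dotProduct_sub]
    have e1 : (Q *ᵥ u) ⬝ᵥ (Q⁻¹ *ᵥ r) = t := by
      rw [hsymm, hQQi, dotProduct_comm, htdef]
    have e2 : (Q *ᵥ u) ⬝ᵥ u = u ⬝ᵥ Q *ᵥ u := by rw [dotProduct_comm]
    rw [e1, e2, hs0def, htdef]
    ring
  rw [expand]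
  -- key scalar facts
  have huHu : u ⬝ᵥ H *ᵥ u = t := by rw [hHu, dotProduct_comm, htdef]
  have ht0 : 0 ≤ t := by
    have := hH.posSemidef.dotProduct_mulVec_nonneg u
    simpa [huHu] using this
  have hs00 : 0 ≤ s0 := by simpa [hs0def] using hQ.inv.posSemidef.dotProduct_mulVec_nonneg r
  have hQu0 : 0 ≤ u ⬝ᵥ Q *ᵥ u := by simpa using hQ.posSemidef.dotProduct_mulVec_nonneg u
  -- from h1 : e^{-ε} uᵀQu ≤ uᵀHu = t
  have i1 : Real.exp (-εH) * (u ⬝ᵥ Q *ᵥ u) ≤ t := by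
    have := h1.dotProduct_mulVec_nonneg u
    simp only [star_trivial, sub_mulVec, dotProduct_sub, smul_mulVec,
      dotProduct_smul, smul_eq_mul] at this
    linarith [huHu ▸ this]
  -- from inv_quad_le : e^{-ε} s0 ≤ t
  have hBpd : (Real.exp εH • Q).PosDef := smul_posDef hQ (Real.exp_pos _)
  have i2 : Real.exp (-εH) * s0 ≤ t := by
    have hmono := inv_quad_le hH hBpd h2 r
    have hBinv : (Real.exp εH • Q)⁻¹ = Real.exp (-εH) • Q⁻¹ := by
      letI := invertibleOfNonzero (Real.exp_ne_zero εH)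
      rw [Matrix.inv_smul Q (Real.exp εH) hQunit]
      congr 1
      rw [Real.exp_neg]
      exact invOf_eq_inv _
    rw [hBinv] at hmono
    have : r ⬝ᵥ (Real.exp (-εH) • Q⁻¹) *ᵥ r = Real.exp (-εH) * s0 := by
      rw [smul_mulVec, dotProduct_smul, smul_eq_mul, hs0def]
    rw [this] at hmono
    simpa [htdef, hudef] using hmono
  -- exponential estimates
  have hee : Real.exp εH * Real.exp (-εH) = 1 := by
    rw [← Real.exp_add]; simp
  have hlow : 1 - εH ≤ Real.exp (-εH) := by
    have := Real.add_one_le_exp (-εH)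
    linarith
  have hup : Real.exp εH ≤ 20 / 19 := by
    have hpos : (0:ℝ) < Real.exp (-εH) := Real.exp_pos _
    have h19 : (19:ℝ)/20 ≤ Real.exp (-εH) := by linarith
    nlinarith
  -- from h2 : uᵀQu ≤ e^{ε} t
  have i3 : u ⬝ᵥ Q *ᵥ u ≤ Real.exp εH * t := by
    nlinarith
  nlinarith [mul_nonneg (sub_nonneg.mpr hup) (sub_nonneg.mpr i2),
    mul_nonneg (sub_nonneg.mpr hlow) hs00, mul_nonneg hεH0.le hs00,
    mul_le_mul_of_nonneg_left i2 (le_of_lt (show (0:ℝ) < 2 - Real.exp εH by linarith))]
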